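/- arXiv:1906.02162 — 3 statements merged into one kernel-verified Lean document; each statement's English description precedes it below -/
import Mathlib

section
/- Let P : ℓ₂ → 𝕂 be a continuous 2-homogeneous polynomial. If there exists a non-weakly null maximizing sequence for P (unit vectors xₙ with |P(xₙ)| → ‖P‖ not converging weakly to 0), then P attains its norm. In particular, the pair (ℓ₂, 𝕂) has the 2-homogeneous polynomial weak maximizing property. -/
open Filter Topology ENNReal

section AuxWeakNull
variable {𝕜 : Type*} [RCLike 𝕜]
local notation "⟪" x ", " y "⟫" => @inner 𝕜 _ _ x y
local notation "H" => lp (fun _ : ℕ => 𝕜) 2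

/-- A bounded sequence in `ℓ²` whose coordinates tend to zero is weakly null. -/
lemma aux_weak_null (C : ℝ)
    (z : ℕ → H) (hzb : ∀ n, ‖z n‖ ≤ C)
    (hz : ∀ i : ℕ, Tendsto (fun n => (z n : ∀ _ : ℕ, 𝕜) i) atTop (𝓝 0))
    (g : H →L[𝕜] 𝕜) :
    Tendsto (fun n => g (z n)) atTop (𝓝 0) := by
  set v : H := (InnerProductSpace.toDual 𝕜 H).symm g with hv
  have hgv : ∀ w : H, g w = ⟪v, w⟫ := fun w => (InnerProductSpace.toDual_symm_apply).symm
  have hC0 : 0 ≤ C := le_trans (norm_nonneg _) (hzb 0)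
  rw [NormedAddCommGroup.tendsto_nhds_zero]
  intro ε hε
  have hδ : 0 < ε / (2 * (C + 1)) := by positivity
  -- choose a finite truncation of `v` close to `v`
  have hsum := lp.hasSum_single (E := fun _ : ℕ => 𝕜) (p := 2) (by norm_num) v
  have hev0 : ∀ᶠ s : Finset ℕ in atTop,
      dist (∑ i ∈ s, lp.single 2 i (v i)) v < ε / (2 * (C + 1)) :=
    (Metric.tendsto_nhds.mp hsum) _ hδ
  obtain ⟨s, hs⟩ := hev0.exists
  set vs : H := ∑ i ∈ s, lp.single 2 i (v i) with hvs
  have hnear : ‖vs - v‖ < ε / (2 * (C + 1)) := by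
    rwa [dist_eq_norm] at hs
  -- the finite part tends to zero
  have hfin : Tendsto (fun n => ⟪vs, z n⟫) atTop (𝓝 0) := by
    have heq : ∀ n, ⟪vs, z n⟫ = ∑ i ∈ s, (starRingEnd 𝕜) (v i) * (z n : ∀ _ : ℕ, 𝕜) i := by
      intro n
      rw [hvs, sum_inner]
      refine Finset.sum_congr rfl fun i _ => ?_
      rw [lp.inner_single_left]
      exact RCLike.inner_apply' _ _
    simp only [heq]
    have h5 : Tendsto (fun n => ∑ i ∈ s, (starRingEnd 𝕜) (v i) * (z n : ∀ _ : ℕ, 𝕜) i) atTop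
        (𝓝 (∑ i ∈ s, (0 : 𝕜))) := by
      refine tendsto_finset_sum _ fun i _ => ?_
      have := (tendsto_const_nhds (x := (starRingEnd 𝕜) (v i)) (f := atTop (α := ℕ))).mul (hz i)
      simpa using this
    simpa using h5
  have hev : ∀ᶠ n in atTop, ‖⟪vs, z n⟫‖ < ε / 2 :=
    (NormedAddCommGroup.tendsto_nhds_zero.mp hfin) (ε / 2) (by positivity)
  filter_upwards [hev] with n hn
  have h1 : ‖g (z n)‖ ≤ ‖⟪v - vs, z n⟫‖ + ‖⟪vs, z n⟫‖ := by
    have heq2 : g (z n) = ⟪v - vs, z n⟫ + ⟪vs, z n⟫ := by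
      rw [hgv, inner_sub_left]; ring
    rw [heq2]; exact norm_add_le _ _
  have h3 : ‖v - vs‖ ≤ ε / (2 * (C + 1)) := by
    rw [← norm_neg]; simpa [neg_sub] using hnear.le
  have h2 : ‖⟪v - vs, z n⟫‖ ≤ ε / (2 * (C + 1)) * C :=
    le_trans (norm_inner_le_norm _ _)
      (mul_le_mul h3 (hzb n) (norm_nonneg _) hδ.le)
  have h4 : ε / (2 * (C + 1)) * C < ε / 2 := by
    rw [div_mul_eq_mul_div, div_lt_div_iff₀ (by positivity) (by norm_num)]
    nlinarith
  have := add_lt_add_of_le_of_lt h2 hn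
  linarith [h1, this, h4]

end AuxWeakNull

set_option maxHeartbeats 1000000 in
/-- a continuous scalar-valued 2-homogeneous polynomial on `ℓ₂`
(represented by a continuous symmetric bilinear form `B`, `P x = B x x`) admitting a
non-weakly null maximizing sequence attains its norm; here
`‖P‖ = sSup {‖B y y‖ : ‖y‖ = 1}`. -/
theorem scalar_2hom_weak_maximizing {𝕜 : Type*} [RCLike 𝕜]
    (B : lp (fun _ : ℕ => 𝕜) 2 →L[𝕜] lp (fun _ : ℕ => 𝕜) 2 →L[𝕜] 𝕜)
    (hsymm : ∀ x y, B x y = B y x)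
    (x : ℕ → lp (fun _ : ℕ => 𝕜) 2)
    (hx1 : ∀ n, ‖x n‖ = 1)
    (hmax : Tendsto (fun n => ‖B (x n) (x n)‖) atTop
      (𝓝 (sSup {c : ℝ | ∃ y, ‖y‖ = 1 ∧ c = ‖B y y‖})))
    (hnw : ¬ ∀ f : lp (fun _ : ℕ => 𝕜) 2 →L[𝕜] 𝕜,
      Tendsto (fun n => f (x n)) atTop (𝓝 0)) :
    ∃ x₀, ‖x₀‖ = 1 ∧ ‖B x₀ x₀‖ = sSup {c : ℝ | ∃ y, ‖y‖ = 1 ∧ c = ‖B y y‖} := by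
  classical
  set S : Set ℝ := {c : ℝ | ∃ y, ‖y‖ = 1 ∧ c = ‖B y y‖} with hS
  set M : ℝ := sSup S with hM
  have h2R : (0:ℝ) < (2 : ℝ≥0∞).toReal := by norm_num
  have hsingle_norm : ‖(lp.single 2 0 ((fun _ : ℕ => (1:𝕜)) 0) : lp (fun _ : ℕ => 𝕜) 2)‖ = 1 := by
    have := lp.norm_single (E := fun _ : ℕ => 𝕜) (p := 2) (by norm_num) 0 ((fun _ : ℕ => (1:𝕜)) 0)
    rw [this]; simp
  have hSbdd : BddAbove S := by
    refine ⟨‖B‖, ?_⟩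
    rintro c ⟨y, hy, rfl⟩
    calc ‖B y y‖ ≤ ‖B y‖ * ‖y‖ := (B y).le_opNorm y
      _ ≤ ‖B‖ * ‖y‖ * ‖y‖ := by gcongr; exact B.le_opNorm y
      _ = ‖B‖ := by rw [hy]; ring
  -- the key pointwise bound
  have hMy : ∀ y : lp (fun _ : ℕ => 𝕜) 2, ‖B y y‖ ≤ M * ‖y‖ ^ 2 := by
    intro y
    rcases eq_or_ne y 0 with rfl | hy0
    · simp
    · have hyn : (0:ℝ) < ‖y‖ := norm_pos_iff.mpr hy0
      set a : 𝕜 := (‖y‖ : 𝕜)⁻¹ with ha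
      have hna : ‖a‖ = ‖y‖⁻¹ := by
        rw [ha, norm_inv, RCLike.norm_ofReal, abs_of_pos hyn]
      have hu : ‖a • y‖ = 1 := by
        rw [norm_smul, hna, inv_mul_cancel₀ hyn.ne']
      have hmem : ‖B (a • y) (a • y)‖ ∈ S := ⟨a • y, hu, rfl⟩
      have hle : ‖B (a • y) (a • y)‖ ≤ M := le_csSup hSbdd hmem
      have hexp : B (a • y) (a • y) = a * (a * B y y) := by
        rw [map_smul, map_smul, ContinuousLinearMap.smul_apply]
        simp [smul_eq_mul]
      rw [hexp, norm_mul, norm_mul, hna] at hle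
      calc ‖B y y‖ = ‖y‖ ^ 2 * (‖y‖⁻¹ * (‖y‖⁻¹ * ‖B y y‖)) := by
            field_simp
        _ ≤ ‖y‖ ^ 2 * M := mul_le_mul_of_nonneg_left hle (sq_nonneg _)
        _ = M * ‖y‖ ^ 2 := mul_comm _ _
  -- extract ε and a subsequence on which `f` is bounded below
  push_neg at hnw
  obtain ⟨f, hf⟩ := hnw
  have hex : ∃ ε > 0, ∃ᶠ n in atTop, ε ≤ ‖f (x n)‖ := by
    by_contra h
    push_neg at h
    apply hf
    rw [NormedAddCommGroup.tendsto_nhds_zero]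
    intro ε hε
    have h' := h ε hε
    filter_upwards [h'] with n hn
    exact hn
  obtain ⟨ε, hε, hfreq⟩ := hex
  obtain ⟨φ₀, hφ₀mono, hφ₀⟩ := Filter.extraction_of_frequently_atTop hfreq
  -- extract a coordinatewise convergent subsequence
  have hcoord : ∀ (n : ℕ) (i : ℕ), ‖(x (φ₀ n) : ∀ _ : ℕ, 𝕜) i‖ ≤ 1 := fun n i => by
    have := lp.norm_apply_le_norm (by norm_num : (2:ℝ≥0∞) ≠ 0) (x (φ₀ n)) i
    rwa [hx1] at this
  have hKc : IsCompact (Set.univ.pi fun _ : ℕ => Metric.closedBall (0:𝕜) 1) :=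
    isCompact_univ_pi fun _ => isCompact_closedBall 0 1
  obtain ⟨c, -, φ₁, hφ₁mono, hφ₁⟩ :=
    hKc.isSeqCompact (x := fun n => ((x (φ₀ n) : ∀ _ : ℕ, 𝕜)))
      (fun n i _ => by
        simpa [Metric.mem_closedBall, dist_zero_right] using hcoord n i)
  set φ : ℕ → ℕ := φ₀ ∘ φ₁ with hφ
  have hφmono : StrictMono φ := hφ₀mono.comp hφ₁mono
  have hφ₁' : ∀ i : ℕ, Tendsto (fun n => (x (φ n) : ∀ _ : ℕ, 𝕜) i) atTop (𝓝 (c i)) :=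
    fun i => tendsto_pi_nhds.mp hφ₁ i
  -- `c` defines an element of ℓ² of norm at most 1
  have hcsum : ∀ s : Finset ℕ, ∑ i ∈ s, ‖c i‖ ^ (2:ℝ≥0∞).toReal ≤ (1:ℝ) := by
    intro s
    have hlim : Tendsto (fun n => ∑ i ∈ s, ‖(x (φ n) : ∀ _ : ℕ, 𝕜) i‖ ^ (2:ℝ≥0∞).toReal)
        atTop (𝓝 (∑ i ∈ s, ‖c i‖ ^ (2:ℝ≥0∞).toReal)) := by
      refine tendsto_finset_sum _ fun i _ => ?_
      exact ((hφ₁' i).norm).rpow_const (Or.inr h2R.le)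
    refine le_of_tendsto hlim (Eventually.of_forall fun n => ?_)
    have := lp.sum_rpow_le_norm_rpow h2R (x (φ n)) s
    rwa [hx1, Real.one_rpow] at this
  have hcmem : Memℓp c 2 := memℓp_gen' hcsum
  set x₀' : lp (fun _ : ℕ => 𝕜) 2 := ⟨c, hcmem⟩ with hx₀'
  have hx₀'le : ‖x₀'‖ ≤ 1 := by
    refine lp.norm_le_of_forall_sum_le h2R zero_le_one fun s => ?_
    simpa [Real.one_rpow] using hcsum s
  -- the shifted sequence is weakly null
  set z : ℕ → lp (fun _ : ℕ => 𝕜) 2 := fun n => x (φ n) - x₀' with hzdef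
  have hzb : ∀ n, ‖z n‖ ≤ 2 := fun n => by
    calc ‖x (φ n) - x₀'‖ ≤ ‖x (φ n)‖ + ‖x₀'‖ := norm_sub_le _ _
      _ ≤ 1 + 1 := by rw [hx1]; gcongr
      _ = 2 := by norm_num
  have hzcoord : ∀ i : ℕ, Tendsto (fun n => (z n : ∀ _ : ℕ, 𝕜) i) atTop (𝓝 0) := by
    intro i
    have hco : ∀ n, (z n : ∀ _ : ℕ, 𝕜) i = (x (φ n) : ∀ _ : ℕ, 𝕜) i - c i := fun n => rfl
    simp only [hco]
    have := (hφ₁' i).sub (tendsto_const_nhds (x := c i))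
    simpa using this
  have hweak : ∀ g : lp (fun _ : ℕ => 𝕜) 2 →L[𝕜] 𝕜, Tendsto (fun n => g (z n)) atTop (𝓝 0) :=
    fun g => aux_weak_null 2 z hzb hzcoord g
  -- x₀' is nonzero
  have hfx : Tendsto (fun n => f (x (φ n))) atTop (𝓝 (f x₀')) := by
    have h1 : ∀ n, f (x (φ n)) = f (z n) + f x₀' := fun n => by
      rw [hzdef]; simp [map_sub]
    simp only [h1]
    simpa using (hweak f).add (tendsto_const_nhds (x := f x₀'))
  have hεf : ε ≤ ‖f x₀'‖ := by
    refine ge_of_tendsto hfx.norm (Eventually.of_forall fun n => ?_)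
    exact hφ₀ (φ₁ n)
  have hx₀'ne : x₀' ≠ 0 := by
    intro h0
    rw [h0] at hεf
    simp at hεf
    linarith
  have ht : (0:ℝ) < ‖x₀'‖ := norm_pos_iff.mpr hx₀'ne
  -- limit of ‖z n‖²
  have hre : ∀ n, RCLike.re (inner (𝕜 := 𝕜) (x (φ n)) x₀')
      = RCLike.re ((innerSL 𝕜 x₀') (z n)) + ‖x₀'‖ ^ 2 := by
    intro n
    have h1 : inner (𝕜 := 𝕜) (x (φ n)) x₀'
        = (starRingEnd 𝕜) (inner (𝕜 := 𝕜) x₀' (z n) + inner (𝕜 := 𝕜) x₀' x₀') := by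
      rw [← inner_conj_symm]
      congr 1
      rw [hzdef]
      simp [inner_sub_right]
    rw [h1, innerSL_apply_apply]
    rw [RCLike.conj_re (K := 𝕜)]
    rw [map_add]
    congr 1
    exact inner_self_eq_norm_sq x₀'
  have hrez : Tendsto (fun n => RCLike.re ((innerSL 𝕜 x₀') (z n))) atTop (𝓝 0) := by
    have := (RCLike.continuous_re (K := 𝕜)).continuousAt.tendsto.comp (hweak (innerSL 𝕜 x₀'))
    rwa [map_zero] at this
  have hzsq : Tendsto (fun n => ‖z n‖ ^ 2) atTop (𝓝 (1 - ‖x₀'‖ ^ 2)) := by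
    have heq : ∀ n, ‖z n‖ ^ 2
        = 1 - 2 * (RCLike.re ((innerSL 𝕜 x₀') (z n)) + ‖x₀'‖ ^ 2) + ‖x₀'‖ ^ 2 := by
      intro n
      have h2 := norm_sub_sq (𝕜 := 𝕜) (x (φ n)) x₀'
      rw [hx1, one_pow, hre n] at h2
      simpa [hzdef] using h2
    simp only [heq]
    have h3 : Tendsto (fun n => 1 - 2 * (RCLike.re ((innerSL 𝕜 x₀') (z n)) + ‖x₀'‖ ^ 2)
        + ‖x₀'‖ ^ 2) atTop (𝓝 (1 - 2 * (0 + ‖x₀'‖ ^ 2) + ‖x₀'‖ ^ 2)) := by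
      exact ((tendsto_const_nhds.sub (tendsto_const_nhds.mul
        (hrez.add tendsto_const_nhds))).add tendsto_const_nhds)
    convert h3 using 2
    ring
  -- the squeeze
  have ha : Tendsto (fun n => ‖B (x (φ n)) (x (φ n))‖) atTop (𝓝 M) :=
    hmax.comp hφmono.tendsto_atTop
  have hab : ∀ n, ‖B (x (φ n)) (x (φ n))‖
      ≤ ‖B x₀' x₀'‖ + ‖B x₀' (z n)‖ + ‖B (z n) x₀'‖ + M * ‖z n‖ ^ 2 := by
    intro n
    have hexp : B (x (φ n)) (x (φ n))
        = B x₀' x₀' + B x₀' (z n) + B (z n) x₀' + B (z n) (z n) := by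
      simp only [hzdef, map_sub, ContinuousLinearMap.sub_apply]
      ring
    rw [hexp]
    calc ‖B x₀' x₀' + B x₀' (z n) + B (z n) x₀' + B (z n) (z n)‖
        ≤ ‖B x₀' x₀'‖ + ‖B x₀' (z n)‖ + ‖B (z n) x₀'‖ + ‖B (z n) (z n)‖ := by
          refine le_trans (norm_add_le _ _) ?_
          have h₃ : ‖B x₀' x₀' + B x₀' (z n) + B (z n) x₀'‖
              ≤ ‖B x₀' x₀'‖ + ‖B x₀' (z n)‖ + ‖B (z n) x₀'‖ := norm_add₃_le
          linarith
      _ ≤ ‖B x₀' x₀'‖ + ‖B x₀' (z n)‖ + ‖B (z n) x₀'‖ + M * ‖z n‖ ^ 2 := by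
          gcongr
          exact hMy (z n)
  have hb : Tendsto (fun n => ‖B x₀' x₀'‖ + ‖B x₀' (z n)‖ + ‖B (z n) x₀'‖ + M * ‖z n‖ ^ 2)
      atTop (𝓝 (‖B x₀' x₀'‖ + 0 + 0 + M * (1 - ‖x₀'‖ ^ 2))) := by
    have h1 : Tendsto (fun n => ‖B x₀' (z n)‖) atTop (𝓝 0) := by
      simpa using (hweak (B x₀')).norm
    have h2 : Tendsto (fun n => ‖B (z n) x₀'‖) atTop (𝓝 0) := by
      have : ∀ n, B (z n) x₀' = B x₀' (z n) := fun n => hsymm _ _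
      simp only [this]
      exact h1
    exact ((tendsto_const_nhds.add h1).add h2).add (tendsto_const_nhds.mul hzsq)
  have hMle : M ≤ ‖B x₀' x₀'‖ + 0 + 0 + M * (1 - ‖x₀'‖ ^ 2) :=
    le_of_tendsto_of_tendsto' ha hb hab
  have hkey : M * ‖x₀'‖ ^ 2 ≤ ‖B x₀' x₀'‖ := by nlinarith [hMle]
  have heq : ‖B x₀' x₀'‖ = M * ‖x₀'‖ ^ 2 := le_antisymm (hMy x₀') hkey
  -- normalize
  set a : 𝕜 := (‖x₀'‖ : 𝕜)⁻¹ with ha'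
  have hna : ‖a‖ = ‖x₀'‖⁻¹ := by
    rw [ha', norm_inv, RCLike.norm_ofReal, abs_of_pos ht]
  refine ⟨a • x₀', ?_, ?_⟩
  · rw [norm_smul, hna, inv_mul_cancel₀ ht.ne']
  · have hexp : B (a • x₀') (a • x₀') = a * (a * B x₀' x₀') := by
      simp only [map_smul, ContinuousLinearMap.smul_apply, smul_eq_mul]
    rw [hexp, norm_mul, norm_mul, hna, heq]
    field_simp
end

section
/- Let H be a Hilbert space and P : H → 𝕂 a continuous 2-homogeneous polynomial with associated symmetric bilinear form T_P. Then ‖P‖ = ‖T_P‖, where ‖T_P‖ = sup{|T_P(x,y)| : ‖x‖ = ‖y‖ = 1}. -/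
/-- Banach: on a Hilbert space, the norm of a continuous 2-homogeneous
polynomial `P x = B x x` associated with a continuous symmetric bilinear form `B`
coincides with the norm of `B` (the operator norm of `B : H →L H →L 𝕜`, which equals
`sup {‖B x y‖ : ‖x‖ = ‖y‖ = 1}`). -/
theorem banach_polynomial_norm {𝕜 H : Type*} [RCLike 𝕜]
    [NormedAddCommGroup H] [InnerProductSpace 𝕜 H] [CompleteSpace H]
    (B : H →L[𝕜] H →L[𝕜] 𝕜) (hsymm : ∀ x y, B x y = B y x) :
    sSup {c : ℝ | ∃ x, ‖x‖ = 1 ∧ c = ‖B x x‖} = ‖B‖ := by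
  set S : Set ℝ := {c : ℝ | ∃ x, ‖x‖ = 1 ∧ c = ‖B x x‖} with hS
  have hbdd : BddAbove S := by
    refine ⟨‖B‖, ?_⟩
    rintro c ⟨x, hx, rfl⟩
    calc ‖B x x‖ ≤ ‖B‖ * ‖x‖ * ‖x‖ := B.le_opNorm₂ x x
      _ = ‖B‖ := by rw [hx]; ring
  set M := sSup S with hM
  have hM0 : 0 ≤ M := Real.sSup_nonneg (by rintro c ⟨x, hx, rfl⟩; positivity)
  have hupper : M ≤ ‖B‖ := by
    rw [hM]
    refine Real.sSup_le ?_ (ContinuousLinearMap.opNorm_nonneg B)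
    rintro c ⟨x, hx, rfl⟩
    calc ‖B x x‖ ≤ ‖B‖ * ‖x‖ * ‖x‖ := B.le_opNorm₂ x x
      _ = ‖B‖ := by rw [hx]; ring
  have hdiag : ∀ z : H, ‖z‖ = 1 → ‖B z z‖ ≤ M := fun z hz => le_csSup hbdd ⟨z, hz, rfl⟩
  have hquad : ∀ z : H, ‖B z z‖ ≤ M * (‖z‖ * ‖z‖) := by
    intro z
    rcases eq_or_ne z 0 with rfl | hz
    · simp
    · have hz' : (0:ℝ) < ‖z‖ := norm_pos_iff.mpr hz
      have hu : ‖((‖z‖⁻¹ : 𝕜) • z : H)‖ = 1 := norm_smul_inv_norm hz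
      have h1 : B ((‖z‖⁻¹ : 𝕜) • z) ((‖z‖⁻¹ : 𝕜) • z)
          = (‖z‖⁻¹ : 𝕜) * ((‖z‖⁻¹ : 𝕜) * B z z) := by
        simp only [map_smul, ContinuousLinearMap.smul_apply, smul_eq_mul]
      have h2 := hdiag _ hu
      rw [h1, norm_mul, norm_mul] at h2
      have hnc : ‖((‖z‖ : 𝕜))⁻¹‖ = ‖z‖⁻¹ := by
        rw [norm_inv, RCLike.norm_ofReal, abs_of_pos hz']
      rw [hnc] at h2
      have h3 : ‖z‖⁻¹ * (‖z‖⁻¹ * ‖B z z‖) ≤ M := h2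
      calc ‖B z z‖ = (‖z‖ * ‖z‖) * (‖z‖⁻¹ * (‖z‖⁻¹ * ‖B z z‖)) := by
            field_simp
        _ ≤ (‖z‖ * ‖z‖) * M := by gcongr
        _ = M * (‖z‖ * ‖z‖) := by ring
  have hunit : ∀ u v : H, ‖u‖ = 1 → ‖v‖ = 1 → ‖B u v‖ ≤ M := by
    intro u v hu hv
    have hpol : B (u+v) (u+v) - B (u-v) (u-v) = 4 * B u v := by
      have hvu := hsymm v u
      simp only [map_add, map_sub, ContinuousLinearMap.add_apply,
        ContinuousLinearMap.sub_apply, hvu]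
      ring
    have hpar := parallelogram_law_with_norm 𝕜 u v
    have h4 : ‖(4 : 𝕜) * B u v‖ = 4 * ‖B u v‖ := by
      rw [norm_mul]; norm_num
    calc ‖B u v‖ = (1/4) * ‖B (u+v) (u+v) - B (u-v) (u-v)‖ := by
          rw [hpol, h4]; ring
      _ ≤ (1/4) * (‖B (u+v) (u+v)‖ + ‖B (u-v) (u-v)‖) := by
          gcongr; exact norm_sub_le _ _
      _ ≤ (1/4) * (M * (‖u+v‖ * ‖u+v‖) + M * (‖u-v‖ * ‖u-v‖)) := by
          gcongr <;> apply hquad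
      _ = (M/4) * (‖u+v‖ * ‖u+v‖ + ‖u-v‖ * ‖u-v‖) := by ring
      _ = (M/4) * (2 * (‖u‖ * ‖u‖ + ‖v‖ * ‖v‖)) := by simp only [← sq]; rw [hpar]
      _ = M := by rw [hu, hv]; ring
  have hlow : ‖B‖ ≤ M := by
    apply ContinuousLinearMap.opNorm_le_bound _ hM0
    intro x
    apply ContinuousLinearMap.opNorm_le_bound _ (by positivity)
    intro y
    rcases eq_or_ne x 0 with rfl | hx
    · simp
    rcases eq_or_ne y 0 with rfl | hy
    · simp
    have hx' : (0:ℝ) < ‖x‖ := norm_pos_iff.mpr hx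
    have hy' : (0:ℝ) < ‖y‖ := norm_pos_iff.mpr hy
    have h := hunit _ _ (norm_smul_inv_norm (𝕜 := 𝕜) hx) (norm_smul_inv_norm (𝕜 := 𝕜) hy)
    have h1 : B ((‖x‖⁻¹ : 𝕜) • x) ((‖y‖⁻¹ : 𝕜) • y)
        = (‖x‖⁻¹ : 𝕜) * ((‖y‖⁻¹ : 𝕜) * B x y) := by
      simp only [map_smul, ContinuousLinearMap.smul_apply, smul_eq_mul]
      ring
    have hnx : ‖((‖x‖ : 𝕜))⁻¹‖ = ‖x‖⁻¹ := by
      rw [norm_inv, RCLike.norm_ofReal, abs_of_pos hx']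
    have hny : ‖((‖y‖ : 𝕜))⁻¹‖ = ‖y‖⁻¹ := by
      rw [norm_inv, RCLike.norm_ofReal, abs_of_pos hy']
    rw [h1, norm_mul, norm_mul, hnx, hny] at h
    calc ‖B x y‖ = (‖x‖ * ‖y‖) * (‖x‖⁻¹ * (‖y‖⁻¹ * ‖B x y‖)) := by field_simp
      _ ≤ (‖x‖ * ‖y‖) * M := by gcongr
      _ = M * ‖x‖ * ‖y‖ := by ring
  exact le_antisymm hupper hlow
end

section
/- Suppose the pair (E, F) has the m-homogeneous polynomial weak maximizing property. Let P : E → F be a continuous m-homogeneous polynomial and K : E → F a completely continuous (weak-to-norm sequentially continuous) m-homogeneous polynomial with ‖P‖ < ‖P + K‖. Then P + K attains its norm. -/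
open Filter Topology

/-- if `(E, F)` has the `m`-homogeneous polynomial weak maximizing
property, `P` is a continuous `m`-homogeneous polynomial, `K` is a completely continuous
`m`-homogeneous polynomial, and `‖P‖ < ‖P + K‖` (norms being sups over the unit sphere),
then `P + K` attains its norm. -/
theorem completely_continuous_perturbation {𝕜 E F : Type*} [RCLike 𝕜]
    [NormedAddCommGroup E] [NormedSpace 𝕜 E] [CompleteSpace E]
    [NormedAddCommGroup F] [NormedSpace 𝕜 F] [CompleteSpace F]
    (m : ℕ) (hm : 1 ≤ m)
    (hWMP : ∀ Q : E → F,
      (∃ TQ : ContinuousMultilinearMap 𝕜 (fun _ : Fin m => E) F,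
        ∀ x, Q x = TQ (fun _ => x)) →
      (∃ x : ℕ → E, (∀ n, ‖x n‖ = 1) ∧
        Tendsto (fun n => ‖Q (x n)‖) atTop
          (𝓝 (sSup {c : ℝ | ∃ y, ‖y‖ = 1 ∧ c = ‖Q y‖})) ∧
        ¬ ∀ f : E →L[𝕜] 𝕜, Tendsto (fun n => f (x n)) atTop (𝓝 0)) →
      ∃ x₀, ‖x₀‖ = 1 ∧ ‖Q x₀‖ = sSup {c : ℝ | ∃ y, ‖y‖ = 1 ∧ c = ‖Q y‖})
    (P K : E → F)
    (hP : ∃ TP : ContinuousMultilinearMap 𝕜 (fun _ : Fin m => E) F,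
      ∀ x, P x = TP (fun _ => x))
    (hK : ∃ TK : ContinuousMultilinearMap 𝕜 (fun _ : Fin m => E) F,
      ∀ x, K x = TK (fun _ => x))
    (hKcc : ∀ (x : ℕ → E) (x₀ : E),
      (∀ f : E →L[𝕜] 𝕜, Tendsto (fun n => f (x n)) atTop (𝓝 (f x₀))) →
      Tendsto (fun n => K (x n)) atTop (𝓝 (K x₀)))
    (hlt : sSup {c : ℝ | ∃ y, ‖y‖ = 1 ∧ c = ‖P y‖} <
      sSup {c : ℝ | ∃ y, ‖y‖ = 1 ∧ c = ‖P y + K y‖}) :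
    ∃ x₀, ‖x₀‖ = 1 ∧ ‖P x₀ + K x₀‖ =
      sSup {c : ℝ | ∃ y, ‖y‖ = 1 ∧ c = ‖P y + K y‖} := by

  classical
  obtain ⟨TP, hTP⟩ := hP
  obtain ⟨TK, hTK⟩ := hK
  have hFin : Nonempty (Fin m) := ⟨⟨0, hm⟩⟩
  set Q : E → F := fun y => P y + K y with hQdef
  set SQ : Set ℝ := {c : ℝ | ∃ y, ‖y‖ = 1 ∧ c = ‖Q y‖} with hSQ
  have hQpoly : ∃ TQ : ContinuousMultilinearMap 𝕜 (fun _ : Fin m => E) F,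
      ∀ x, Q x = TQ (fun _ => x) := ⟨TP + TK, fun x => by
    simp [hQdef, hTP x, hTK x]⟩
  -- nonempty unit sphere
  by_cases hne : ∃ y : E, ‖y‖ = 1
  · obtain ⟨y₀, hy₀⟩ := hne
    have hQne : SQ.Nonempty := ⟨‖Q y₀‖, y₀, hy₀, rfl⟩
    have hQbdd : BddAbove SQ := by
      refine ⟨‖TP + TK‖, ?_⟩
      rintro c ⟨y, hy, rfl⟩
      have := (TP + TK).le_opNorm (fun _ => y)
      simpa [hQdef, hTP y, hTK y, hy] using this
    set S : ℝ := sSup SQ with hS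
    -- maximizing sequence
    have hseq : ∀ n : ℕ, ∃ y : E, ‖y‖ = 1 ∧ S - 1 / (n + 1) < ‖Q y‖ := by
      intro n
      have hlt' : S - 1 / (n + 1) < S := by
        have : (0:ℝ) < 1 / (n + 1) := by positivity
        linarith
      obtain ⟨c, hc, hc'⟩ := exists_lt_of_lt_csSup hQne hlt'
      obtain ⟨y, hy, rfl⟩ := hc
      exact ⟨y, hy, hc'⟩
    choose x hx1 hx2 using hseq
    have hxle : ∀ n, ‖Q (x n)‖ ≤ S := fun n => le_csSup hQbdd ⟨x n, hx1 n, rfl⟩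
    have htend : Tendsto (fun n => ‖Q (x n)‖) atTop (𝓝 S) := by
      have hlow : Tendsto (fun n : ℕ => S - 1 / (n + 1)) atTop (𝓝 S) := by
        have := (tendsto_one_div_add_atTop_nhds_zero_nat :
          Tendsto (fun n : ℕ => 1 / ((n : ℝ) + 1)) atTop (𝓝 0))
        simpa using tendsto_const_nhds.sub this
      exact tendsto_of_tendsto_of_tendsto_of_le_of_le hlow tendsto_const_nhds
        (fun n => (hx2 n).le) hxle
    -- the sequence is not weakly null
    have hnotnull : ¬ ∀ f : E →L[𝕜] 𝕜, Tendsto (fun n => f (x n)) atTop (𝓝 0) := by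
      intro hnull
      have hK0 : K 0 = 0 := by
        have : (fun _ : Fin m => (0:E)) = (0 : (i : Fin m) → E) := rfl
        rw [hTK 0, this, TK.map_zero]
      have hKtend : Tendsto (fun n => K (x n)) atTop (𝓝 0) := by
        have := hKcc x 0 (fun f => by simpa using hnull f)
        simpa [hK0] using this
      have hKnorm : Tendsto (fun n => ‖K (x n)‖) atTop (𝓝 0) := by
        simpa using hKtend.norm
      have hPbdd : BddAbove {c : ℝ | ∃ y, ‖y‖ = 1 ∧ c = ‖P y‖} := by
        refine ⟨‖TP‖, ?_⟩
        rintro c ⟨y, hy, rfl⟩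
        have := TP.le_opNorm (fun _ => y)
        simpa [hTP y, hy] using this
      have hPle : ∀ n, ‖Q (x n)‖ - ‖K (x n)‖ ≤
          sSup {c : ℝ | ∃ y, ‖y‖ = 1 ∧ c = ‖P y‖} := by
        intro n
        have h1 : ‖Q (x n)‖ ≤ ‖P (x n)‖ + ‖K (x n)‖ := norm_add_le _ _
        have h2 : ‖P (x n)‖ ≤ sSup {c : ℝ | ∃ y, ‖y‖ = 1 ∧ c = ‖P y‖} :=
          le_csSup hPbdd ⟨x n, hx1 n, rfl⟩
        linarith
      have hlim : Tendsto (fun n => ‖Q (x n)‖ - ‖K (x n)‖) atTop (𝓝 S) := by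
        simpa using htend.sub hKnorm
      have : S ≤ sSup {c : ℝ | ∃ y, ‖y‖ = 1 ∧ c = ‖P y‖} :=
        le_of_tendsto hlim (Filter.Eventually.of_forall hPle)
      exact absurd hlt (not_lt.mpr this)
    exact hWMP Q hQpoly ⟨x, hx1, htend, hnotnull⟩
  · exfalso
    have h1 : {c : ℝ | ∃ y : E, ‖y‖ = 1 ∧ c = ‖P y‖} = ∅ := by
      ext c; simp only [Set.mem_setOf_eq, Set.mem_empty_iff_false, iff_false]
      rintro ⟨y, hy, -⟩; exact hne ⟨y, hy⟩
    have h2 : {c : ℝ | ∃ y : E, ‖y‖ = 1 ∧ c = ‖P y + K y‖} = ∅ := by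
      ext c; simp only [Set.mem_setOf_eq, Set.mem_empty_iff_false, iff_false]
      rintro ⟨y, hy, -⟩; exact hne ⟨y, hy⟩
    rw [h1, show SQ = ∅ from hSQ.trans h2] at hlt
    exact lt_irrefl _ hlt
end
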